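/- Let (M, c) be a gem with more than 4 vertices that has a 2-edge cut. Let c' be any colouring obtained from c by swapping the colours red and blue on a set of edges that is a union of connected components of the spanning subgraph formed by the red and blue edges (and leaving all other colours unchanged). Then (M, c') has a 2-edge cut both of whose edges are coloured yellow under c'. -/

import Mathlib

/-- The three colours used in a gem. -/
inductive Colour : Type
  | red | yellow | blue
deriving DecidableEq

/-- A proper edge colouring of a graph: two distinct edges sharing an endpoint
receive different colours. -/
def ProperEdgeColouring {V : Type*} {α : Type*} (G : SimpleGraph V) (c : Sym2 V → α) : Prop :=
  ∀ e₁ ∈ G.edgeSet, ∀ e₂ ∈ G.edgeSet, e₁ ≠ e₂ → (∃ v, v ∈ e₁ ∧ v ∈ e₂) → c e₁ ≠ c e₂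

/-- A cubic graph: every vertex has degree 3. -/
def IsCubic {V : Type*} (G : SimpleGraph V) : Prop :=
  ∀ v : V, (G.neighborSet v).ncard = 3

/-- The edge cut determined by a vertex set `S`: the set of edges of `G`
with exactly one endpoint in `S`. -/
def edgeCut {V : Type*} (G : SimpleGraph V) (S : Set V) : Set (Sym2 V) :=
  {e | ∃ u v, e = s(u, v) ∧ G.Adj u v ∧ u ∈ S ∧ v ∉ S}

/-- The spanning subgraph of `G` formed by the edges coloured `x` or `y`. -/
def twoColourSubgraph {V : Type*} {α : Type*} (G : SimpleGraph V) (c : Sym2 V → α)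
    (x y : α) : SimpleGraph V where
  Adj u v := G.Adj u v ∧ (c s(u, v) = x ∨ c s(u, v) = y)
  symm := by
    constructor
    intro u v h
    refine ⟨h.1.symm, ?_⟩
    rw [Sym2.eq_swap]
    exact h.2
  loopless := ⟨fun v h => G.irrefl h.1⟩

/-- A gem: a connected cubic graph with a proper 3-edge-colouring (red, yellow,
blue) such that every connected component of the spanning subgraph formed by
the red and blue edges is a cycle of length 4 (equivalently, for a simple
graph: that subgraph is 2-regular and each of its connected components has
exactly 4 vertices). -/
structure IsGem {V : Type*} (M : SimpleGraph V) (c : Sym2 V → Colour) : Prop where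
  connected : M.Connected
  cubic : IsCubic M
  proper : ProperEdgeColouring M c
  rb_two_regular : ∀ v : V,
    ((twoColourSubgraph M c Colour.red Colour.blue).neighborSet v).ncard = 2
  rb_components_card4 : ∀ v : V,
    ((twoColourSubgraph M c Colour.red Colour.blue).connectedComponentMk v).supp.ncard = 4

/-- Exchange red and blue, leaving yellow fixed. -/
def swapColour : Colour → Colour
  | Colour.red => Colour.blue
  | Colour.blue => Colour.red
  | Colour.yellow => Colour.yellow

open Classical in
/-- The colouring obtained from `c` by swapping the colours red and blue on
every edge of `D` and leaving all other edges unchanged. -/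
noncomputable def swapRB {V : Type*} (c : Sym2 V → Colour) (D : Set (Sym2 V)) :
    Sym2 V → Colour :=
  fun e => if e ∈ D then swapColour (c e) else c e

/-- `D` is a union of connected components of the red-blue spanning subgraph:
every edge of `D` is a red-blue edge, and any two red-blue edges lying in the
same connected component of the red-blue subgraph are either both in `D` or
both outside `D`. -/
def UnionOfRBComponents {V : Type*} (M : SimpleGraph V) (c : Sym2 V → Colour)
    (D : Set (Sym2 V)) : Prop :=
  D ⊆ (twoColourSubgraph M c Colour.red Colour.blue).edgeSet ∧
  ∀ e₁ ∈ (twoColourSubgraph M c Colour.red Colour.blue).edgeSet,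
    ∀ e₂ ∈ (twoColourSubgraph M c Colour.red Colour.blue).edgeSet,
      (∃ u v, u ∈ e₁ ∧ v ∈ e₂ ∧
        (twoColourSubgraph M c Colour.red Colour.blue).Reachable u v) →
      (e₁ ∈ D ↔ e₂ ∈ D)

-- auxiliary development
namespace GemAux
open SimpleGraph

abbrev RB {V : Type*} (M : SimpleGraph V) (c : Sym2 V → Colour) : SimpleGraph V :=
  twoColourSubgraph M c Colour.red Colour.blue

variable {V : Type*} {M : SimpleGraph V} {c : Sym2 V → Colour}

lemma colour_cases (x : Colour) : x = Colour.red ∨ x = Colour.yellow ∨ x = Colour.blue := by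
  cases x <;> simp

lemma rb_adj_iff {u v : V} :
    (RB M c).Adj u v ↔ M.Adj u v ∧ (c s(u,v) = Colour.red ∨ c s(u,v) = Colour.blue) := Iff.rfl

lemma rb_adj_of {u v : V} (h : M.Adj u v)
    (h2 : c s(u,v) = Colour.red ∨ c s(u,v) = Colour.blue) : (RB M c).Adj u v := ⟨h, h2⟩

lemma rb_not_yellow {u v : V} (h : (RB M c).Adj u v) : c s(u,v) ≠ Colour.yellow := by
  rcases h.2 with h2 | h2 <;> simp [h2]

lemma rb_edge_not_yellow {e : Sym2 V} (h : e ∈ (RB M c).edgeSet) : c e ≠ Colour.yellow := by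
  induction e using Sym2.ind with
  | _ u v => exact rb_not_yellow (by rwa [← SimpleGraph.mem_edgeSet])

lemma mem_edgeCut_of {S : Set V} {u v : V} (h : M.Adj u v) (hu : u ∈ S) (hv : v ∉ S) :
    s(u, v) ∈ edgeCut M S := ⟨u, v, rfl, h, hu, hv⟩

variable [Fintype V]


-- even/odd via involutions
lemma even_ncard_of_invol' : ∀ (n : ℕ) (A : Set V) (f : V → V), A.ncard = n →
    (∀ q ∈ A, f q ∈ A ∧ f q ≠ q ∧ f (f q) = q) → Even n := by
  intro n
  induction n using Nat.strong_induction_on with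
  | _ n ih =>
    intro A f hn h
    rcases A.eq_empty_or_nonempty with hA | ⟨x, hx⟩
    · simp [hA] at hn; simp [← hn]
    · obtain ⟨hfx, hfnex, hffx⟩ := h x hx
      set A' : Set V := A \ {x, f x} with hA'
      have hxA' : x ∉ A' := by simp [hA']
      have hfxA' : f x ∉ A' := by simp [hA']
      have hsplit : A = insert x (insert (f x) A') := by
        ext q
        simp only [hA', Set.mem_insert_iff, Set.mem_diff, Set.mem_singleton_iff]
        constructor
        · intro hq
          by_cases h1 : q = x
          · exact Or.inl h1
          by_cases h2 : q = f x
          · exact Or.inr (Or.inl h2)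
          · exact Or.inr (Or.inr ⟨hq, by simp [h1, h2]⟩)
        · rintro (rfl | rfl | ⟨hq, _⟩) <;> [exact hx; exact hfx; exact hq]
      have hcard : n = A'.ncard + 2 := by
        rw [← hn, hsplit, Set.ncard_insert_of_notMem
          (by simp [hfnex.symm, hxA']) (Set.toFinite _),
          Set.ncard_insert_of_notMem hfxA' (Set.toFinite _)]
      have hlt : A'.ncard < n := by omega
      have hEven : Even A'.ncard := by
        refine ih _ hlt A' f rfl ?_
        intro q hq
        obtain ⟨hqA, hq2⟩ := hq
        simp only [Set.mem_insert_iff, Set.mem_singleton_iff, not_or] at hq2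
        obtain ⟨hfq, hfneq, hffq⟩ := h q hqA
        refine ⟨⟨hfq, ?_⟩, hfneq, hffq⟩
        simp only [Set.mem_insert_iff, Set.mem_singleton_iff, not_or]
        constructor
        · intro hc; exact hq2.2 (by rw [← hffq, hc])
        · intro hc
          have : f (f q) = f (f x) := by rw [hc]
          rw [hffq, hffx] at this
          exact hq2.1 this
      rw [hcard]
      exact hEven.add even_two
  
lemma even_ncard_of_invol (A : Set V) (f : V → V)
    (h : ∀ q ∈ A, f q ∈ A ∧ f q ≠ q ∧ f (f q) = q) : Even A.ncard :=
  even_ncard_of_invol' _ A f rfl h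

lemma odd_ncard_of_invol (A : Set V) (f : V → V) (hinv : ∀ q, f (f q) = q)
    (hne : ∀ q, f q ≠ q) (t : V) (ht : t ∈ A) (hft : f t ∉ A)
    (hcl : ∀ q ∈ A, q ≠ t → f q ∈ A) : Odd A.ncard := by
  have hcard : A.ncard = (A \ {t}).ncard + 1 :=
    (Set.ncard_diff_singleton_add_one ht (Set.toFinite _)).symm
  have hEven : Even (A \ {t}).ncard := by
    refine even_ncard_of_invol _ f ?_
    rintro q ⟨hq, hq2⟩
    simp only [Set.mem_singleton_iff] at hq2
    refine ⟨⟨hcl q hq hq2, ?_⟩, hne q, hinv q⟩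
    simp only [Set.mem_singleton_iff]
    intro hc
    have hq' : f t = q := by rw [← hc, hinv]
    exact hft (hq' ▸ hq)
  rw [hcard]
  exact hEven.add_one

end GemAux
-- continue_DONE
namespace GemAux
open SimpleGraph
variable {V : Type*} [Fintype V] {M : SimpleGraph V} {c : Sym2 V → Colour}

lemma exists_unique_yellow (hgem : IsGem M c) (v : V) :
    ∃ w, (M.Adj v w ∧ c s(v, w) = Colour.yellow) ∧
      ∀ w', M.Adj v w' → c s(v, w') = Colour.yellow → w' = w := by
  have h3 : (M.neighborSet v).ncard = 3 := hgem.cubic v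
  have h2 : ((RB M c).neighborSet v).ncard = 2 := hgem.rb_two_regular v
  have hsub : (RB M c).neighborSet v ⊆ M.neighborSet v := fun w hw => hw.1
  have hd : (M.neighborSet v \ (RB M c).neighborSet v).ncard = 1 := by
    rw [Set.ncard_diff hsub (Set.toFinite _), h3, h2]
  obtain ⟨w, hw⟩ := Set.ncard_eq_one.mp hd
  have hwmem : w ∈ M.neighborSet v \ (RB M c).neighborSet v := by rw [hw]; rfl
  obtain ⟨hw1, hw2⟩ := hwmem
  have hwy : c s(v, w) = Colour.yellow := by
    rcases colour_cases (c s(v, w)) with h | h | h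
    · exact absurd (rb_adj_of hw1 (Or.inl h)) hw2
    · exact h
    · exact absurd (rb_adj_of hw1 (Or.inr h)) hw2
  refine ⟨w, ⟨hw1, hwy⟩, ?_⟩
  intro w' hadj hcol
  have : w' ∈ M.neighborSet v \ (RB M c).neighborSet v := by
    refine ⟨hadj, fun hc => ?_⟩
    exact rb_not_yellow hc hcol
  rw [hw] at this
  exact this

noncomputable def yel (hgem : IsGem M c) (v : V) : V :=
  (exists_unique_yellow hgem v).choose

lemma yel_adj (hgem : IsGem M c) (v : V) : M.Adj v (yel hgem v) :=
  (exists_unique_yellow hgem v).choose_spec.1.1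

lemma yel_colour (hgem : IsGem M c) (v : V) : c s(v, yel hgem v) = Colour.yellow :=
  (exists_unique_yellow hgem v).choose_spec.1.2

lemma yel_eq (hgem : IsGem M c) {v w : V} (h : M.Adj v w)
    (hc : c s(v, w) = Colour.yellow) : w = yel hgem v :=
  (exists_unique_yellow hgem v).choose_spec.2 w h hc

lemma yel_invol (hgem : IsGem M c) (v : V) : yel hgem (yel hgem v) = v :=
  ((exists_unique_yellow hgem (yel hgem v)).choose_spec.2 v (yel_adj hgem v).symm
    (by rw [Sym2.eq_swap]; exact yel_colour hgem v)).symm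

lemma yel_ne (hgem : IsGem M c) (v : V) : yel hgem v ≠ v :=
  fun h => M.irrefl (h ▸ yel_adj hgem v)

lemma rb_structure (hgem : IsGem M c) (v : V) :
    ∃ a b d : V, a ≠ b ∧ v ≠ a ∧ v ≠ b ∧ v ≠ d ∧ d ≠ a ∧ d ≠ b ∧
      (RB M c).neighborSet v = {a, b} ∧ (RB M c).neighborSet a = {v, d} ∧
      (RB M c).neighborSet b = {v, d} ∧ (RB M c).neighborSet d = {a, b} := by
  obtain ⟨a, b, hab, hN⟩ := Set.ncard_eq_two.mp (hgem.rb_two_regular v)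
  have hva : (RB M c).Adj v a := by
    rw [← SimpleGraph.mem_neighborSet, hN]; left; rfl
  have hvb : (RB M c).Adj v b := by
    rw [← SimpleGraph.mem_neighborSet, hN]; right; rfl
  set K := ((RB M c).connectedComponentMk v).supp with hK
  have hK4 : K.ncard = 4 := hgem.rb_components_card4 v
  have hvK : v ∈ K := by rw [hK, ConnectedComponent.mem_supp_iff]
  have hmemK : ∀ p q : V, p ∈ K → (RB M c).Adj p q → q ∈ K := by
    intro p q hp hpq
    rw [hK, ConnectedComponent.mem_supp_iff] at hp ⊢
    rw [← hp]
    exact ConnectedComponent.eq.mpr hpq.symm.reachable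
  have haK : a ∈ K := hmemK v a hvK hva
  have hbK : b ∈ K := hmemK v b hvK hvb
  have hnsub : ¬ K ⊆ ({v, a, b} : Set V) := by
    intro h
    have := Set.ncard_le_ncard h (Set.toFinite _)
    have h3 : ({v, a, b} : Set V).ncard ≤ 3 := by
      refine le_trans (Set.ncard_insert_le _ _) ?_
      have := Set.ncard_insert_le a ({b} : Set V)
      simp only [Set.ncard_singleton] at this
      omega
    omega
  obtain ⟨d, hdK, hd3⟩ := Set.not_subset.mp hnsub
  simp only [Set.mem_insert_iff, Set.mem_singleton_iff, not_or] at hd3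
  obtain ⟨hdv, hda, hdb⟩ := hd3
  have hvnea : v ≠ a := hva.ne
  have hvneb : v ≠ b := hvb.ne
  have hvd : v ≠ d := fun h => hdv h.symm
  have had : a ≠ d := fun h => hda h.symm
  have hbd : b ≠ d := fun h => hdb h.symm
  -- K = {v, a, b, d}
  have hset4 : ({v, a, b, d} : Set V).ncard = 4 := by
    rw [Set.ncard_insert_of_notMem (by simp [hvnea, hvneb, hvd]) (Set.toFinite _),
      Set.ncard_insert_of_notMem (by simp [hab, had]) (Set.toFinite _),
      Set.ncard_insert_of_notMem (by simp [hbd]) (Set.toFinite _),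
      Set.ncard_singleton]
  have hKeq : ({v, a, b, d} : Set V) = K := by
    refine Set.eq_of_subset_of_ncard_le ?_ (by rw [hK4, hset4]) (Set.toFinite _)
    rintro q (rfl | rfl | rfl | rfl)
    exacts [hvK, haK, hbK, hdK]
  -- neighbours of d
  have hvnotd : ¬ (RB M c).Adj d v := by
    intro h
    have hmem : d ∈ (RB M c).neighborSet v := (SimpleGraph.mem_neighborSet _ _ _).mpr h.symm
    rw [hN] at hmem
    rcases hmem with h' | h'
    · exact hda h'
    · exact hdb h'
  have hNd : (RB M c).neighborSet d = {a, b} := by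
    refine Set.eq_of_subset_of_ncard_le ?_ ?_ (Set.toFinite _)
    · intro r hr
      have hradj : (RB M c).Adj d r := (SimpleGraph.mem_neighborSet _ _ _).mp hr
      have hrK : r ∈ K := hmemK d r hdK hradj
      rw [← hKeq] at hrK
      rcases hrK with rfl | rfl | rfl | rfl
      · exact absurd hradj hvnotd
      · left; rfl
      · right; rfl
      · exact absurd rfl hradj.ne
    · rw [hgem.rb_two_regular d, Set.ncard_pair hab]
  have hda' : (RB M c).Adj d a := by
    have : a ∈ (RB M c).neighborSet d := by rw [hNd]; left; rfl
    exact (SimpleGraph.mem_neighborSet _ _ _).mp this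
  have hdb' : (RB M c).Adj d b := by
    have : b ∈ (RB M c).neighborSet d := by rw [hNd]; right; rfl
    exact (SimpleGraph.mem_neighborSet _ _ _).mp this
  have hNa : (RB M c).neighborSet a = {v, d} := by
    refine (Set.eq_of_subset_of_ncard_le ?_ ?_ (Set.toFinite _)).symm
    · rintro r (rfl | rfl)
      · exact (SimpleGraph.mem_neighborSet _ _ _).mpr hva.symm
      · exact (SimpleGraph.mem_neighborSet _ _ _).mpr hda'.symm
    · rw [hgem.rb_two_regular a, Set.ncard_pair hvd]
  have hNb : (RB M c).neighborSet b = {v, d} := by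
    refine (Set.eq_of_subset_of_ncard_le ?_ ?_ (Set.toFinite _)).symm
    · rintro r (rfl | rfl)
      · exact (SimpleGraph.mem_neighborSet _ _ _).mpr hvb.symm
      · exact (SimpleGraph.mem_neighborSet _ _ _).mpr hdb'.symm
    · rw [hgem.rb_two_regular b, Set.ncard_pair hvd]
  exact ⟨a, b, d, hab, hvnea, hvneb, hvd, hda, hdb, hN, hNa, hNb, hNd⟩


lemma rb_structure' (hgem : IsGem M c) {v a : V} (hva : (RB M c).Adj v a) :
    ∃ b d : V, a ≠ b ∧ v ≠ a ∧ v ≠ b ∧ v ≠ d ∧ d ≠ a ∧ d ≠ b ∧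
      (RB M c).neighborSet v = {a, b} ∧ (RB M c).neighborSet a = {v, d} ∧
      (RB M c).neighborSet b = {v, d} ∧ (RB M c).neighborSet d = {a, b} := by
  obtain ⟨a0, b0, d, hab, hvnea, hvneb, hvd, hda, hdb, hN, hNa, hNb, hNd⟩ :=
    rb_structure hgem v
  have hmem : a ∈ (RB M c).neighborSet v := (SimpleGraph.mem_neighborSet _ _ _).mpr hva
  rw [hN] at hmem
  rcases hmem with rfl | rfl
  · exact ⟨b0, d, hab, hvnea, hvneb, hvd, hda, hdb, hN, hNa, hNb, hNd⟩
  · refine ⟨a0, d, fun h => hab h.symm, hvneb, hvnea, hvd, hdb, hda, ?_, hNb, hNa, ?_⟩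
    · rw [hN, Set.pair_comm]
    · rw [hNd, Set.pair_comm]

lemma exists_unique_ant (hgem : IsGem M c) (v : V) :
    ∃ d, (d ≠ v ∧ ∃ a, (RB M c).Adj v a ∧ (RB M c).Adj a d) ∧
      ∀ d', (d' ≠ v ∧ ∃ a', (RB M c).Adj v a' ∧ (RB M c).Adj a' d') → d' = d := by
  obtain ⟨a, b, d, hab, hvnea, hvneb, hvd, hda, hdb, hN, hNa, hNb, hNd⟩ :=
    rb_structure hgem v
  have hva : (RB M c).Adj v a := by
    have : a ∈ (RB M c).neighborSet v := by rw [hN]; left; rfl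
    exact (SimpleGraph.mem_neighborSet _ _ _).mp this
  have hvb : (RB M c).Adj v b := by
    have : b ∈ (RB M c).neighborSet v := by rw [hN]; right; rfl
    exact (SimpleGraph.mem_neighborSet _ _ _).mp this
  have had : (RB M c).Adj a d := by
    have : d ∈ (RB M c).neighborSet a := by rw [hNa]; right; rfl
    exact (SimpleGraph.mem_neighborSet _ _ _).mp this
  have hbd : (RB M c).Adj b d := by
    have : d ∈ (RB M c).neighborSet b := by rw [hNb]; right; rfl
    exact (SimpleGraph.mem_neighborSet _ _ _).mp this
  refine ⟨d, ⟨fun h => hvd h.symm, a, hva, had⟩, ?_⟩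
  rintro d' ⟨hd'v, a', hva', ha'd'⟩
  have hmem : a' ∈ (RB M c).neighborSet v := (SimpleGraph.mem_neighborSet _ _ _).mpr hva'
  rw [hN] at hmem
  rcases hmem with rfl | rfl
  · have : d' ∈ (RB M c).neighborSet a' := (SimpleGraph.mem_neighborSet _ _ _).mpr ha'd'
    rw [hNa] at this
    rcases this with rfl | rfl
    · exact absurd rfl hd'v
    · rfl
  · have : d' ∈ (RB M c).neighborSet a' := (SimpleGraph.mem_neighborSet _ _ _).mpr ha'd'
    rw [hNb] at this
    rcases this with rfl | rfl
    · exact absurd rfl hd'v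
    · rfl

noncomputable def ant (hgem : IsGem M c) (v : V) : V :=
  (exists_unique_ant hgem v).choose

lemma ant_ne (hgem : IsGem M c) (v : V) : ant hgem v ≠ v :=
  (exists_unique_ant hgem v).choose_spec.1.1

lemma ant_spec (hgem : IsGem M c) (v : V) :
    ∃ a, (RB M c).Adj v a ∧ (RB M c).Adj a (ant hgem v) :=
  (exists_unique_ant hgem v).choose_spec.1.2

lemma ant_invol (hgem : IsGem M c) (v : V) : ant hgem (ant hgem v) = v := by
  obtain ⟨a, h1, h2⟩ := ant_spec hgem v
  exact ((exists_unique_ant hgem (ant hgem v)).choose_spec.2 v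
    ⟨fun h => ant_ne hgem v h.symm, a, h2.symm, h1.symm⟩).symm

lemma even_of_rbclosed (hgem : IsGem M c) (A : Set V)
    (hA : ∀ q ∈ A, ∀ r, (RB M c).Adj q r → r ∈ A) : Even A.ncard := by
  refine even_ncard_of_invol A (ant hgem) ?_
  intro q hq
  obtain ⟨a, h1, h2⟩ := ant_spec hgem q
  exact ⟨hA a (hA q hq a h1) _ h2, ant_ne hgem q, ant_invol hgem q⟩

lemma yel_ne_rb (hgem : IsGem M c) {v w : V} (h : (RB M c).Adj v w) :
    yel hgem v ≠ w := fun he => rb_not_yellow h (he ▸ yel_colour hgem v)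

lemma M_nbrs (hgem : IsGem M c) {v a b : V} (hab : a ≠ b)
    (hN : (RB M c).neighborSet v = {a, b}) :
    M.neighborSet v = {a, b, yel hgem v} := by
  have hva : (RB M c).Adj v a := by
    have : a ∈ (RB M c).neighborSet v := by rw [hN]; left; rfl
    exact (SimpleGraph.mem_neighborSet _ _ _).mp this
  have hvb : (RB M c).Adj v b := by
    have : b ∈ (RB M c).neighborSet v := by rw [hN]; right; rfl
    exact (SimpleGraph.mem_neighborSet _ _ _).mp this
  have hya : yel hgem v ≠ a := yel_ne_rb hgem hva
  have hyb : yel hgem v ≠ b := yel_ne_rb hgem hvb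
  refine (Set.eq_of_subset_of_ncard_le ?_ ?_ (Set.toFinite _)).symm
  · rintro r (rfl | rfl | rfl)
    · exact (SimpleGraph.mem_neighborSet _ _ _).mpr hva.1
    · exact (SimpleGraph.mem_neighborSet _ _ _).mpr hvb.1
    · exact (SimpleGraph.mem_neighborSet _ _ _).mpr (yel_adj hgem v)
  · have hay : a ≠ yel hgem v := fun h => hya h.symm
    have hby : b ≠ yel hgem v := fun h => hyb h.symm
    rw [hgem.cubic v, Set.ncard_insert_of_notMem (by simp [hab, hay])
      (Set.toFinite _), Set.ncard_pair hby]



lemma workhorse (hgem : IsGem M c) (S : Set V) (e1 e2 : Sym2 V)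
    (hcutS : edgeCut M S = {e1, e2}) (u1 v1 : V) (he1 : e1 = s(u1, v1))
    (hu1 : u1 ∈ S) (hv1 : v1 ∉ S) (hadj : M.Adj u1 v1)
    (hrb : c s(u1, v1) = Colour.red ∨ c s(u1, v1) = Colour.blue) :
    ∃ (S' : Set V) (g1 g2 : Sym2 V), S'.Nonempty ∧ S'ᶜ.Nonempty ∧ g1 ≠ g2 ∧
      edgeCut M S' = {g1, g2} ∧ c g1 = Colour.yellow ∧ c g2 = Colour.yellow := by
  have hH : (RB M c).Adj u1 v1 := ⟨hadj, hrb⟩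
  obtain ⟨b, d, hv1b, hu1v1, hu1b, hu1d, hdv1, hdb, hN1, hNv1, hNb, hNd⟩ :=
    rb_structure' hgem hH
  have hu1b' : (RB M c).Adj u1 b := by
    have : b ∈ (RB M c).neighborSet u1 := by rw [hN1]; right; rfl
    exact (SimpleGraph.mem_neighborSet _ _ _).mp this
  have hv1d' : (RB M c).Adj v1 d := by
    have : d ∈ (RB M c).neighborSet v1 := by rw [hNv1]; right; rfl
    exact (SimpleGraph.mem_neighborSet _ _ _).mp this
  have hbd' : (RB M c).Adj b d := by
    have : d ∈ (RB M c).neighborSet b := by rw [hNb]; right; rfl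
    exact (SimpleGraph.mem_neighborSet _ _ _).mp this
  have hcy : ∀ p q : V, M.Adj p q → p ∈ S → q ∉ S → s(p, q) = e1 ∨ s(p, q) = e2 := by
    intro p q h hp hq
    have := mem_edgeCut_of h hp hq
    rw [hcutS] at this
    simpa using this
  have hce1 : c e1 ≠ Colour.yellow := by
    rw [he1]; rcases hrb with h | h <;> simp [h]
  have key : c e2 ≠ Colour.yellow → ∀ p, (p ∈ S ↔ yel hgem p ∈ S) := by
    intro hce2 p
    constructor
    · intro hp; by_contra hyp
      rcases hcy p (yel hgem p) (yel_adj hgem p) hp hyp with h | h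
      · exact hce1 (h ▸ yel_colour hgem p)
      · exact hce2 (h ▸ yel_colour hgem p)
    · intro hp; by_contra hyp
      rcases hcy (yel hgem p) p (yel_adj hgem p).symm hp hyp with h | h
      · refine hce1 (h ▸ ?_); rw [Sym2.eq_swap]; exact yel_colour hgem p
      · refine hce2 (h ▸ ?_); rw [Sym2.eq_swap]; exact yel_colour hgem p
  by_cases hb : b ∈ S <;> by_cases hd : d ∈ S
  · -- b ∈ S, d ∈ S : contradiction via bridge at v1
    exfalso
    have he2 : e2 = s(d, v1) := by
      rcases hcy d v1 hv1d'.symm.1 hd hv1 with h | h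
      · rw [he1, Sym2.eq_iff] at h
        rcases h with ⟨h1, _⟩ | ⟨h1, _⟩
        · exact absurd h1.symm hu1d
        · exact absurd h1 hdv1
      · exact h.symm
    have hce2 : c e2 ≠ Colour.yellow := by
      rw [he2]; exact rb_not_yellow hv1d'.symm
    have key' := key hce2
    set A : Set V := Sᶜ \ {v1} with hA
    have hEven : Even A.ncard := by
      refine even_of_rbclosed hgem A ?_
      rintro q ⟨hqc, hqv⟩ r hqr
      simp only [Set.mem_singleton_iff] at hqv
      have hqS : q ∉ S := hqc
      by_cases hrS : r ∈ S
      · exfalso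
        rcases hcy r q hqr.symm.1 hrS hqS with h | h
        · rw [he1, Sym2.eq_iff] at h
          rcases h with ⟨_, h2⟩ | ⟨h1, _⟩
          · exact hqv h2
          · rw [h1] at hrS; exact hv1 hrS
        · rw [he2, Sym2.eq_iff] at h
          rcases h with ⟨_, h2⟩ | ⟨h1, _⟩
          · exact hqv h2
          · rw [h1] at hrS; exact hv1 hrS
      · refine ⟨hrS, ?_⟩
        simp only [Set.mem_singleton_iff]
        rintro rfl
        have : q ∈ (RB M c).neighborSet r := (SimpleGraph.mem_neighborSet _ _ _).mpr hqr.symm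
        rw [hNv1] at this
        rcases this with rfl | rfl
        · exact hqS hu1
        · exact hqS hd
    have hOdd : Odd A.ncard := by
      refine odd_ncard_of_invol A (yel hgem) (yel_invol hgem) (yel_ne hgem)
        (yel hgem v1) ⟨?_, ?_⟩ ?_ ?_
      · exact fun h => hv1 ((key' v1).mpr h)
      · simp only [Set.mem_singleton_iff]
        exact yel_ne hgem v1
      · rw [yel_invol hgem v1]
        simp [hA]
      · rintro q ⟨hqc, hqv⟩ hqt
        simp only [Set.mem_singleton_iff] at hqv
        refine ⟨fun h => hqc ((key' q).mpr h), ?_⟩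
        simp only [Set.mem_singleton_iff]
        intro hc
        exact hqt (by rw [← hc, yel_invol hgem q])
    exact (Nat.not_even_iff_odd.mpr hOdd) hEven
  · -- b ∈ S, d ∉ S : the good case
    have he2 : e2 = s(b, d) := by
      rcases hcy b d hbd'.1 hb hd with h | h
      · rw [he1, Sym2.eq_iff] at h
        rcases h with ⟨h1, _⟩ | ⟨h1, _⟩
        · exact absurd h1.symm hu1b
        · exact absurd h1.symm hv1b
      · exact h.symm
    have hce2 : c e2 ≠ Colour.yellow := by
      rw [he2]; exact rb_not_yellow hbd'
    have key' := key hce2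
    have hyu1S : yel hgem u1 ∈ S := (key' u1).mp hu1
    have hybS : yel hgem b ∈ S := (key' b).mp hb
    have hyu1b : yel hgem u1 ≠ b := yel_ne_rb hgem hu1b'
    have hybu1 : yel hgem b ≠ u1 := yel_ne_rb hgem hu1b'.symm
    refine ⟨S \ {u1, b}, s(u1, yel hgem u1), s(b, yel hgem b), ?_, ?_, ?_, ?_, ?_, ?_⟩
    · exact ⟨yel hgem u1, hyu1S, by simp [yel_ne hgem u1, hyu1b]⟩
    · exact ⟨v1, fun h => hv1 h.1⟩
    · intro h
      rw [Sym2.eq_iff] at h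
      rcases h with ⟨h1, _⟩ | ⟨h1, _⟩
      · exact hu1b h1
      · exact hybu1 h1.symm
    · ext e
      constructor
      · rintro ⟨p, q, rfl, hpq, hp, hq⟩
        obtain ⟨hpS, hpn⟩ := hp
        simp only [Set.mem_insert_iff, Set.mem_singleton_iff, not_or] at hpn
        obtain ⟨hpu1, hpb⟩ := hpn
        by_cases hqS : q ∈ S
        · have hqn : q ∈ ({u1, b} : Set V) := by
            by_contra hqn
            exact hq ⟨hqS, hqn⟩
          rcases hqn with rfl | rfl
          · have : p ∈ M.neighborSet q := (SimpleGraph.mem_neighborSet _ _ _).mpr hpq.symm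
            rw [M_nbrs hgem hv1b hN1] at this
            rcases this with rfl | rfl | rfl
            · exact absurd hpS hv1
            · exact absurd rfl hpb
            · left; exact Sym2.eq_swap
          · have : p ∈ M.neighborSet q := (SimpleGraph.mem_neighborSet _ _ _).mpr hpq.symm
            rw [M_nbrs hgem hu1d hNb] at this
            rcases this with rfl | rfl | rfl
            · exact absurd rfl hpu1
            · exact absurd hpS hd
            · right; exact Sym2.eq_swap
        · exfalso
          rcases hcy p q hpq hpS hqS with h | h
          · rw [he1, Sym2.eq_iff] at h
            rcases h with ⟨h1, _⟩ | ⟨h1, _⟩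
            · exact hpu1 h1
            · rw [h1] at hpS; exact hv1 hpS
          · rw [he2, Sym2.eq_iff] at h
            rcases h with ⟨h1, _⟩ | ⟨h1, _⟩
            · exact hpb h1
            · rw [h1] at hpS; exact hd hpS
      · rintro (rfl | rfl)
        · refine ⟨yel hgem u1, u1, Sym2.eq_swap, (yel_adj hgem u1).symm,
            ⟨hyu1S, by simp [yel_ne hgem u1, hyu1b]⟩, ?_⟩
          intro h
          exact h.2 (by left; rfl)
        · refine ⟨yel hgem b, b, Sym2.eq_swap, (yel_adj hgem b).symm,
            ⟨hybS, by simp [yel_ne hgem b, hybu1]⟩, ?_⟩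
          intro h
          exact h.2 (by right; rfl)
    · exact yel_colour hgem u1
    · exact yel_colour hgem b
  · -- b ∉ S, d ∈ S : impossible
    exfalso
    have h1 : s(u1, b) = e2 := by
      rcases hcy u1 b hu1b'.1 hu1 hb with h | h
      · rw [he1, Sym2.eq_iff] at h
        rcases h with ⟨_, h2⟩ | ⟨h2, _⟩
        · exact absurd h2.symm hv1b
        · exact absurd h2 hu1v1
      · exact h
    have h2 : s(d, v1) = e2 := by
      rcases hcy d v1 hv1d'.symm.1 hd hv1 with h | h
      · rw [he1, Sym2.eq_iff] at h
        rcases h with ⟨h3, _⟩ | ⟨h3, _⟩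
        · exact absurd h3.symm hu1d
        · exact absurd h3 hdv1
      · exact h
    rw [← h2, Sym2.eq_iff] at h1
    rcases h1 with ⟨h3, _⟩ | ⟨h3, _⟩
    · exact hu1d h3
    · exact hu1v1 h3
  · -- b ∉ S, d ∉ S : contradiction via bridge at u1
    exfalso
    have he2 : e2 = s(u1, b) := by
      rcases hcy u1 b hu1b'.1 hu1 hb with h | h
      · rw [he1, Sym2.eq_iff] at h
        rcases h with ⟨_, h2⟩ | ⟨h2, _⟩
        · exact absurd h2.symm hv1b
        · exact absurd h2 hu1v1
      · exact h.symm
    have hce2 : c e2 ≠ Colour.yellow := by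
      rw [he2]; exact rb_not_yellow hu1b'
    have key' := key hce2
    set A : Set V := S \ {u1} with hA
    have hEven : Even A.ncard := by
      refine even_of_rbclosed hgem A ?_
      rintro q ⟨hqS, hqu⟩ r hqr
      simp only [Set.mem_singleton_iff] at hqu
      by_cases hrS : r ∈ S
      · refine ⟨hrS, ?_⟩
        simp only [Set.mem_singleton_iff]
        rintro rfl
        have : q ∈ (RB M c).neighborSet r := (SimpleGraph.mem_neighborSet _ _ _).mpr hqr.symm
        rw [hN1] at this
        rcases this with rfl | rfl
        · exact hv1 hqS
        · exact hb hqS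
      · exfalso
        rcases hcy q r hqr.1 hqS hrS with h | h
        · rw [he1, Sym2.eq_iff] at h
          rcases h with ⟨h1, _⟩ | ⟨h1, _⟩
          · exact hqu h1
          · rw [h1] at hqS; exact hv1 hqS
        · rw [he2, Sym2.eq_iff] at h
          rcases h with ⟨h1, _⟩ | ⟨h1, _⟩
          · exact hqu h1
          · rw [h1] at hqS; exact hb hqS
    have hOdd : Odd A.ncard := by
      refine odd_ncard_of_invol A (yel hgem) (yel_invol hgem) (yel_ne hgem)
        (yel hgem u1) ⟨?_, ?_⟩ ?_ ?_
      · exact (key' u1).mp hu1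
      · simp only [Set.mem_singleton_iff]
        exact yel_ne hgem u1
      · rw [yel_invol hgem u1]
        simp [hA]
      · rintro q ⟨hqS, hqu⟩ hqt
        simp only [Set.mem_singleton_iff] at hqu
        refine ⟨(key' q).mp hqS, ?_⟩
        simp only [Set.mem_singleton_iff]
        intro hc
        exact hqt (by rw [← hc, yel_invol hgem q])
    exact (Nat.not_even_iff_odd.mpr hOdd) hEven

end GemAux

open GemAux in
/-- If a gem with more than 4 vertices has a 2-edge cut, then after swapping
red and blue on any union of connected components of the red-blue spanning
subgraph (a partial dual), the resulting gem has a 2-edge cut both of whose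
edges are yellow under the new colouring. -/
theorem swapRB_yellow_two_edge_cut {V : Type*} [Fintype V]
    (M : SimpleGraph V) (c : Sym2 V → Colour) (hgem : IsGem M c)
    (hcard : 4 < Fintype.card V)
    (hcut : ∃ S : Set V, S.Nonempty ∧ Sᶜ.Nonempty ∧ (edgeCut M S).ncard = 2)
    (D : Set (Sym2 V)) (hD : UnionOfRBComponents M c D) :
    ∃ (S : Set V) (g1 g2 : Sym2 V), S.Nonempty ∧ Sᶜ.Nonempty ∧ g1 ≠ g2 ∧
      edgeCut M S = {g1, g2} ∧
      swapRB c D g1 = Colour.yellow ∧ swapRB c D g2 = Colour.yellow := by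
  obtain ⟨S, hS1, hS2, hS3⟩ := hcut
  obtain ⟨e1, e2, hne, hcutS⟩ := Set.ncard_eq_two.mp hS3
  have hswap : ∀ g : Sym2 V, c g = Colour.yellow → swapRB c D g = Colour.yellow := by
    intro g hg
    have hgD : g ∉ D := fun h => rb_edge_not_yellow (hD.1 h) hg
    simp [swapRB, hgD, hg]
  have he1mem : e1 ∈ edgeCut M S := by rw [hcutS]; left; rfl
  obtain ⟨u1, v1, he1, hadj1, hu1, hv1⟩ := he1mem
  rcases colour_cases (c e1) with h1 | h1 | h1
  · obtain ⟨S', g1, g2, a1, a2, a3, a4, a5, a6⟩ :=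
      workhorse hgem S e1 e2 hcutS u1 v1 he1 hu1 hv1 hadj1 (Or.inl (he1 ▸ h1))
    exact ⟨S', g1, g2, a1, a2, a3, a4, hswap _ a5, hswap _ a6⟩
  · rcases colour_cases (c e2) with h2 | h2 | h2
    · have hcutS' : edgeCut M S = {e2, e1} := by rw [hcutS, Set.pair_comm]
      have he2mem : e2 ∈ edgeCut M S := by rw [hcutS]; right; rfl
      obtain ⟨u2, v2, he2, hadj2, hu2, hv2⟩ := he2mem
      obtain ⟨S', g1, g2, a1, a2, a3, a4, a5, a6⟩ :=
        workhorse hgem S e2 e1 hcutS' u2 v2 he2 hu2 hv2 hadj2 (Or.inl (he2 ▸ h2))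
      exact ⟨S', g1, g2, a1, a2, a3, a4, hswap _ a5, hswap _ a6⟩
    · exact ⟨S, e1, e2, hS1, hS2, hne, hcutS, hswap _ h1, hswap _ h2⟩
    · have hcutS' : edgeCut M S = {e2, e1} := by rw [hcutS, Set.pair_comm]
      have he2mem : e2 ∈ edgeCut M S := by rw [hcutS]; right; rfl
      obtain ⟨u2, v2, he2, hadj2, hu2, hv2⟩ := he2mem
      obtain ⟨S', g1, g2, a1, a2, a3, a4, a5, a6⟩ :=
        workhorse hgem S e2 e1 hcutS' u2 v2 he2 hu2 hv2 hadj2 (Or.inr (he2 ▸ h2))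
      exact ⟨S', g1, g2, a1, a2, a3, a4, hswap _ a5, hswap _ a6⟩
  · obtain ⟨S', g1, g2, a1, a2, a3, a4, a5, a6⟩ :=
      workhorse hgem S e1 e2 hcutS u1 v1 he1 hu1 hv1 hadj1 (Or.inr (he1 ▸ h1))
    exact ⟨S', g1, g2, a1, a2, a3, a4, hswap _ a5, hswap _ a6⟩
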